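/- The bigclaw graph is not weakly closed. -/

import Mathlib

/-- `G` is weakly closed: some labeling of the vertices by `1, …, n` is such that for
every edge `{i, j}` with `i < j` and every `i < k < j`, `{i,k} ∈ E(G)` or `{k,j} ∈ E(G)`. -/
def WeaklyClosed {V : Type*} [Fintype V] (G : SimpleGraph V) : Prop :=
  ∃ σ : V ≃ Fin (Fintype.card V), ∀ i j k : V,
    G.Adj i j → σ i < σ k → σ k < σ j → G.Adj i k ∨ G.Adj k j

/-- The bigclaw: the tree on seven vertices `c = 0`, `a₁ = 1`, `a₂ = 2`, `a₃ = 3`,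
`b₁ = 4`, `b₂ = 5`, `b₃ = 6` with edges `{c,aᵢ}` and `{aᵢ,bᵢ}` for `i = 1, 2, 3`. -/
def bigclaw : SimpleGraph (Fin 7) :=
  SimpleGraph.fromEdgeSet {s(0, 1), s(0, 2), s(0, 3), s(1, 4), s(2, 5), s(3, 6)}

/-- Adjacency bitmasks for the bigclaw on vertices `0, …, 6`. -/
def adjMask : Nat → Nat
  | 0 => 2+4+8
  | 1 => 1+16
  | 2 => 1+32
  | 3 => 1+64
  | 4 => 2
  | 5 => 4
  | 6 => 8
  | _ => 0

/-- Boolean adjacency for the bigclaw. -/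
def adjN (i j : Nat) : Bool := adjMask i &&& (1 <<< j) != 0

def bigclawEdges : List (Nat × Nat) := [(0,1),(0,2),(0,3),(1,4),(2,5),(3,6)]

/-- `l.getD v 0` is the label of vertex `v`; `check l` says the weak-closedness
condition holds for this labeling. -/
def check (l : List Nat) : Bool :=
  bigclawEdges.all fun e =>
    (List.range 7).all fun k =>
      (adjN e.1 k || adjN k e.2 ||
        !((l.getD e.1 0 < l.getD k 0 && l.getD k 0 < l.getD e.2 0) ||
          (l.getD e.2 0 < l.getD k 0 && l.getD k 0 < l.getD e.1 0)))

set_option maxRecDepth 10000 in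
set_option maxHeartbeats 4000000 in
theorem key : ((List.range 7).all fun v =>
    (((List.range 7).filter (fun x => x != v)).permutations'.all
      fun l => !(check (v :: l)))) = true := by decide

theorem key2 (l : List Nat) (hp : List.Perm l (List.range 7)) : check l = false := by
  match l with
  | [] => exact absurd (hp.length_eq) (by simp)
  | v :: rest =>
    rw [List.cons_perm_iff_perm_erase] at hp
    obtain ⟨hv, hrest⟩ := hp
    have herase : (List.range 7).erase v = (List.range 7).filter (fun x => x != v) := by
      rw [List.Nodup.erase_eq_filter (List.nodup_range (n := 7)) v]
    rw [herase] at hrest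
    have hk := List.all_eq_true.mp key v hv
    have hk2 := List.all_eq_true.mp hk rest (List.mem_permutations'.mpr hrest)
    simpa using hk2

lemma adj_iff (i j : Fin 7) : bigclaw.Adj i j ↔ adjN i.val j.val = true := by
  show (SimpleGraph.fromEdgeSet _).Adj i j ↔ _
  rw [SimpleGraph.fromEdgeSet_adj]
  simp only [Set.mem_insert_iff, Set.mem_singleton_iff]
  revert i j
  decide

lemma aux (τ : Fin 7 ≃ Fin 7)
    (h : ∀ i j k : Fin 7, bigclaw.Adj i j → τ i < τ k → τ k < τ j →
      bigclaw.Adj i k ∨ bigclaw.Adj k j) : False := by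
  classical
  let l : List Nat := (List.finRange 7).map (fun v => (τ v).val)
  have hget : ∀ v : Fin 7, l.getD v.val 0 = (τ v).val := by
    intro v
    have hlen : v.val < l.length := by simp [l]
    rw [List.getD_eq_getElem l 0 hlen]
    simp [l]
  have hnodup : l.Nodup := by
    refine List.Nodup.map ?_ (List.nodup_finRange 7)
    intro a b hab
    exact τ.injective (Fin.val_injective hab)
  have hperm : List.Perm l (List.range 7) := by
    apply List.perm_of_nodup_nodup_toFinset_eq hnodup (List.nodup_range (n := 7))
    ext x
    simp only [List.mem_toFinset, List.mem_range, l, List.mem_map, List.mem_finRange]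
    constructor
    · rintro ⟨v, _, rfl⟩; exact (τ v).isLt
    · intro hx
      exact ⟨τ.symm ⟨x, hx⟩, trivial, by simp⟩
  have hfalse : check l = false := key2 l hperm
  have htrue : check l = true := by
    rw [check, List.all_eq_true]
    intro e he
    rw [List.all_eq_true]
    intro k hk
    have hk7 : k < 7 := List.mem_range.mp hk
    -- generic step, for an edge (i, j) of the bigclaw
    have step : ∀ i j : Fin 7, bigclaw.Adj i j → e.1 = i.val → e.2 = j.val →
        (adjN e.1 k || adjN k e.2 ||
          !((l.getD e.1 0 < l.getD k 0 && l.getD k 0 < l.getD e.2 0) ||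
            (l.getD e.2 0 < l.getD k 0 && l.getD k 0 < l.getD e.1 0))) = true := by
      intro i j hadj he1 he2
      set m : Fin 7 := ⟨k, hk7⟩ with hm
      have hkm : k = m.val := rfl
      rw [he1, he2, hkm, hget i, hget j, hget m]
      by_cases hb : ((τ i).val < (τ m).val ∧ (τ m).val < (τ j).val) ∨
          ((τ j).val < (τ m).val ∧ (τ m).val < (τ i).val)
      · have key3 : bigclaw.Adj i m ∨ bigclaw.Adj m j := by
          rcases hb with ⟨h1, h2⟩ | ⟨h1, h2⟩
          · exact h i j m hadj h1 h2
          · have := h j i m hadj.symm h1 h2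
            tauto
        rcases key3 with hx | hx
        · rw [adj_iff] at hx
          simp [hx]
        · rw [adj_iff] at hx
          simp [hx]
      · have hbb : (((τ i).val < (τ m).val && (τ m).val < (τ j).val) ||
            ((τ j).val < (τ m).val && (τ m).val < (τ i).val)) = false := by
          rw [Bool.eq_false_iff]
          intro hc
          apply hb
          simpa using hc
        rw [hbb]
        simp
    -- now six concrete edges
    simp only [bigclawEdges, List.mem_cons, List.not_mem_nil, or_false] at he
    rcases he with rfl | rfl | rfl | rfl | rfl | rfl
    · exact step 0 1 (by rw [adj_iff]; decide) rfl rfl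
    · exact step 0 2 (by rw [adj_iff]; decide) rfl rfl
    · exact step 0 3 (by rw [adj_iff]; decide) rfl rfl
    · exact step 1 4 (by rw [adj_iff]; decide) rfl rfl
    · exact step 2 5 (by rw [adj_iff]; decide) rfl rfl
    · exact step 3 6 (by rw [adj_iff]; decide) rfl rfl
  rw [htrue] at hfalse
  exact Bool.noConfusion hfalse

/-- The bigclaw graph is not weakly closed. -/
theorem bigclaw_not_weaklyClosed : ¬ WeaklyClosed bigclaw := by
  rintro ⟨σ, h⟩
  refine aux (σ.trans (finCongr (Fintype.card_fin 7))) ?_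
  intro i j k hadj h1 h2
  refine h i j k hadj ?_ ?_
  · rw [Fin.lt_def]
    simpa only [Equiv.trans_apply, finCongr_apply, Fin.coe_cast, Fin.lt_def] using h1
  · rw [Fin.lt_def]
    simpa only [Equiv.trans_apply, finCongr_apply, Fin.coe_cast, Fin.lt_def] using h2
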